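/- For every θ ∈ (0,1) and every set F ⊆ ℝ^d, the upper spectrum satisfies \overline{dim}_GB F ≤ \overline{dim}_A^θ F ≤ min{ \overline{dim}_GB F / (1−θ), dim_qA F }. -/

import Mathlib

open Filter Metric Set Topology Bornology ENNReal
open MeasureTheory

noncomputable section

variable {X : Type*} [PseudoMetricSpace X]

/-- `coveringNumber r E` is the smallest number of closed balls of radius `r`
needed to cover `E` (with value `⊤` if no finite cover exists). -/
def coveringNumber (r : ℝ) (E : Set X) : ℕ∞ :=
  sInf {n : ℕ∞ | ∃ t : Finset X, (E ⊆ ⋃ x ∈ t, closedBall x r) ∧ (t.card : ℕ∞) = n}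

/-- The Assouad spectrum `dim_A^θ F`. -/
def assouadSpectrum (θ : ℝ) (F : Set X) : ℝ :=
  sInf {s : ℝ | 0 ≤ s ∧ ∃ C > (0 : ℝ), ∀ R : ℝ, 0 < R → R < 1 → ∀ x ∈ F,
    (coveringNumber (R ^ (1 / θ)) (closedBall x R ∩ F) : ℝ≥0∞)
      ≤ ENNReal.ofReal (C * (R / R ^ (1 / θ)) ^ s)}

/-- The upper spectrum `\overline{dim}_A^θ F`. -/
def upperSpectrum (θ : ℝ) (F : Set X) : ℝ :=
  sInf {s : ℝ | 0 ≤ s ∧ ∃ C > (0 : ℝ), ∀ r R : ℝ, 0 < r → r ≤ R ^ (1 / θ) →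
    R ^ (1 / θ) < R → R < 1 → 0 < R → ∀ x ∈ F,
    (coveringNumber r (closedBall x R ∩ F) : ℝ≥0∞) ≤ ENNReal.ofReal (C * (R / r) ^ s)}

/-- The generalized upper box dimension `\overline{dim}_{GB} F := limsup_{θ → 0⁺} dim_A^θ F`. -/
def genUpperBoxDim (F : Set X) : ℝ :=
  limsup (fun θ : ℝ => assouadSpectrum θ F) (𝓝[>] (0 : ℝ))

/-- The quasi-Assouad dimension `dim_{qA} F := lim_{θ → 1⁻} \overline{dim}_A^θ F`
(the limit exists by monotonicity, hence equals the limsup). -/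
def quasiAssouadDim (F : Set X) : ℝ :=
  limsup (fun θ : ℝ => upperSpectrum θ F) (𝓝[<] (1 : ℝ))

/-- The upper box dimension `\overline{dim}_B F := limsup_{δ → 0⁺} log N_δ(F) / (- log δ)`. -/
def upperBoxDim (F : Set X) : ℝ :=
  limsup (fun δ : ℝ => Real.log ((coveringNumber δ F).toNat : ℝ) / (- Real.log δ))
    (𝓝[>] (0 : ℝ))

/-- The Assouad dimension `dim_A F`. -/
def assouadDim (F : Set X) : ℝ :=
  sInf {s : ℝ | 0 ≤ s ∧ ∃ C > (0 : ℝ), ∃ ρ > (0 : ℝ), ∀ r R : ℝ, 0 < r → r < R → R < ρ →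
    ∀ x ∈ F, (coveringNumber r (closedBall x R ∩ F) : ℝ≥0∞) ≤ ENNReal.ofReal (C * (R / r) ^ s)}

/-- The packing pre-measure at scale `δ`: the supremum of `∑ |B_i|^s` over at most countable
collections of disjoint closed balls of radii at most `δ` (and positive) with centres in `F`,
where `|B_i| = 2 r_i` is the diameter. -/
def packingPre (s δ : ℝ) (F : Set X) : ℝ≥0∞ :=
  ⨆ (D : Set (X × ℝ)) (_ : D.Countable)
    (_ : ∀ p ∈ D, p.1 ∈ F ∧ 0 < p.2 ∧ p.2 ≤ δ)
    (_ : D.Pairwise fun p q => Disjoint (closedBall p.1 p.2) (closedBall q.1 q.2)),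
    ∑' p : D, ENNReal.ofReal ((2 * (p : X × ℝ).2) ^ s)

/-- `𝒫₀^s(F) := lim_{δ → 0} 𝒫_δ^s(F)`; the limit exists by monotonicity and equals the inf. -/
def packingPre₀ (s : ℝ) (F : Set X) : ℝ≥0∞ :=
  ⨅ (δ : ℝ) (_ : 0 < δ), packingPre s δ F

/-- The packing (outer) measure `𝒫^s(F)`. -/
def packingMeasure (s : ℝ) (F : Set X) : ℝ≥0∞ :=
  ⨅ (G : ℕ → Set X) (_ : F ⊆ ⋃ i, G i), ∑' i, packingPre₀ s (G i)

/-- The packing dimension `dim_P F = inf {s ≥ 0 : 𝒫^s(F) = 0}`. -/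
def packingDim (F : Set X) : ℝ :=
  sInf {s : ℝ | 0 ≤ s ∧ packingMeasure s F = 0}


lemma coveringNumber_le_card {r : ℝ} {E : Set X} {t : Finset X}
    (h : E ⊆ ⋃ x ∈ t, closedBall x r) : coveringNumber r E ≤ t.card :=
  sInf_le ⟨t, h, rfl⟩

lemma coveringNumber_le_ofReal {r M : ℝ} {E : Set X}
    (h : ∃ t : Finset X, (E ⊆ ⋃ x ∈ t, closedBall x r) ∧ (t.card : ℝ) ≤ M) :
    (coveringNumber r E : ℝ≥0∞) ≤ ENNReal.ofReal M := by
  obtain ⟨t, ht, hc⟩ := h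
  have h1 : (coveringNumber r E : ℝ≥0∞) ≤ ((t.card : ℕ∞) : ℝ≥0∞) :=
    ENat.toENNReal_le.2 (coveringNumber_le_card ht)
  refine h1.trans ?_
  have : ((t.card : ℕ∞) : ℝ≥0∞) = ((t.card : ℕ) : ℝ≥0∞) := by simp
  rw [this, ← ENNReal.ofReal_natCast]
  exact ENNReal.ofReal_le_ofReal hc

lemma exists_cover_of_coveringNumber_le {r M : ℝ} {E : Set X} (hM : 0 ≤ M)
    (h : (coveringNumber r E : ℝ≥0∞) ≤ ENNReal.ofReal M) :
    ∃ t : Finset X, (E ⊆ ⋃ x ∈ t, closedBall x r) ∧ (t.card : ℝ) ≤ M := by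
  have htop : coveringNumber r E ≠ ⊤ := by
    intro he
    rw [he] at h
    simp at h
  have hne : {n : ℕ∞ | ∃ t : Finset X, (E ⊆ ⋃ x ∈ t, closedBall x r) ∧ (t.card : ℕ∞) = n}.Nonempty := by
    by_contra hcon
    rw [Set.not_nonempty_iff_eq_empty] at hcon
    exact htop (by rw [_root_.coveringNumber, hcon, sInf_empty])
  obtain ⟨t, ht, hc⟩ := csInf_mem hne
  refine ⟨t, ht, ?_⟩
  have h2 : ((t.card : ℕ∞) : ℝ≥0∞) ≤ ENNReal.ofReal M := by
    rw [hc]; exact h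
  have h3 : ((t.card : ℕ) : ℝ≥0∞) ≤ ENNReal.ofReal M := by
    simpa using h2
  rw [← ENNReal.ofReal_natCast] at h3
  exact (ENNReal.ofReal_le_ofReal_iff hM).1 h3

/-- Recentring a cover inside `F`. -/
lemma recenter_cover {σ : ℝ} (hσ : 0 ≤ σ) {A F : Set X} (hAF : A ⊆ F) {t : Finset X}
    (h : A ⊆ ⋃ y ∈ t, closedBall y σ) :
    ∃ t' : Finset X, ↑t' ⊆ F ∧ (A ⊆ ⋃ y ∈ t', closedBall y (2 * σ)) ∧ t'.card ≤ t.card := by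
  classical
  set f : X → X := fun y => if h : (closedBall y σ ∩ A).Nonempty then h.some else y with hf
  refine ⟨(t.filter fun y => (closedBall y σ ∩ A).Nonempty).image f, ?_, ?_, ?_⟩
  · intro z hz
    simp only [Finset.coe_image, Set.mem_image, Finset.mem_coe, Finset.mem_filter] at hz
    obtain ⟨y, ⟨-, hy⟩, rfl⟩ := hz
    have : f y = hy.some := by simp [hf, hy]
    rw [this]
    exact hAF hy.some_mem.2
  · intro a ha
    obtain ⟨y, hyt, hay⟩ := Set.mem_iUnion₂.1 (h ha)
    have hy : (closedBall y σ ∩ A).Nonempty := ⟨a, hay, ha⟩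
    have hfy : f y = hy.some := by simp [hf, hy]
    refine Set.mem_iUnion₂.2 ⟨f y, ?_, ?_⟩
    · exact Finset.mem_image.2 ⟨y, Finset.mem_filter.2 ⟨hyt, hy⟩, rfl⟩
    · have h1 : dist a y ≤ σ := mem_closedBall.1 hay
      have h2 : dist (f y) y ≤ σ := by rw [hfy]; exact mem_closedBall.1 hy.some_mem.1
      have := dist_triangle a y (f y)
      rw [mem_closedBall]
      rw [dist_comm (f y) y] at h2
      linarith [dist_triangle a y (f y)]
  · exact (Finset.card_image_le).trans (Finset.card_filter_le _ _)

/-- Covering a ball in `ℝ^d` by `ρ`-balls: at most `4^d max(1, R/ρ)^d` balls needed. -/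
lemma euclidean_cover (d : ℕ) (x : EuclideanSpace ℝ (Fin d)) {R ρ : ℝ}
    (hρ : 0 < ρ) (hR : 0 < R) :
    ∃ t : Finset (EuclideanSpace ℝ (Fin d)),
      (closedBall x R ⊆ ⋃ y ∈ t, closedBall y ρ) ∧
      (t.card : ℝ) ≤ 4 ^ d * (max 1 (R / ρ)) ^ d := by
  classical
  have h4 : (1:ℝ) ≤ 4 ^ d * (max 1 (R / ρ)) ^ d := by
    have h1 : (1:ℝ) ≤ 4 ^ d := one_le_pow₀ (by norm_num)
    have h2 : (1:ℝ) ≤ (max 1 (R / ρ)) ^ d := one_le_pow₀ (le_max_left _ _)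
    nlinarith
  rcases le_or_gt R ρ with hRρ | hρR
  · refine ⟨{x}, ?_, ?_⟩
    · intro y hy
      simp only [Finset.mem_singleton, Set.mem_iUnion]
      exact ⟨x, rfl, closedBall_subset_closedBall hRρ hy⟩
    · simpa using h4
  · -- volume bound for separated sets
    have hsepbound : ∀ S : Finset (EuclideanSpace ℝ (Fin d)), ↑S ⊆ closedBall x R →
        (∀ a ∈ S, ∀ b ∈ S, a ≠ b → ρ < dist a b) → (S.card : ℝ) ≤ (4 * R / ρ) ^ d := by
      intro S hSx hSsep
      have hdisj : (↑S : Set (EuclideanSpace ℝ (Fin d))).PairwiseDisjoint (fun a => closedBall a (ρ/2)) := by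
        intro a ha b hb hab
        exact closedBall_disjoint_closedBall (by
          have := hSsep a (by simpa using ha) b (by simpa using hb) hab
          linarith)
      have hmeas : ∀ b ∈ S, MeasurableSet (closedBall b (ρ/2)) :=
        fun b _ => measurableSet_closedBall
      have hU : (⋃ a ∈ S, closedBall a (ρ/2)) ⊆ closedBall x (R + ρ/2) := by
        intro y hy
        obtain ⟨a, haS, hya⟩ := Set.mem_iUnion₂.1 hy
        have h1 : dist a x ≤ R := hSx (by simpa using haS)
        have h2 : dist y a ≤ ρ/2 := mem_closedBall.1 hya
        rw [mem_closedBall]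
        linarith [dist_triangle y a x]
      have hvol := measure_biUnion_finset hdisj hmeas (μ := volume)
      set v := (volume : Measure (EuclideanSpace ℝ (Fin d))) (ball 0 1) with hv
      have hfr : Module.finrank ℝ (EuclideanSpace ℝ (Fin d)) = d := finrank_euclideanSpace_fin
      have hball : ∀ a : EuclideanSpace ℝ (Fin d), (volume : Measure (EuclideanSpace ℝ (Fin d))) (closedBall a (ρ/2))
          = ENNReal.ofReal ((ρ/2) ^ d) * v := by
        intro a
        rw [Measure.addHaar_closedBall (volume : Measure (EuclideanSpace ℝ (Fin d))) a (by linarith), hfr]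
      have hle : (S.card : ℝ≥0∞) * (ENNReal.ofReal ((ρ/2) ^ d) * v)
          ≤ ENNReal.ofReal ((R + ρ/2) ^ d) * v := by
        calc (S.card : ℝ≥0∞) * (ENNReal.ofReal ((ρ/2) ^ d) * v)
            = ∑ a ∈ S, (volume : Measure (EuclideanSpace ℝ (Fin d))) (closedBall a (ρ/2)) := by
              simp [hball, Finset.sum_const, nsmul_eq_mul]
          _ = (volume : Measure (EuclideanSpace ℝ (Fin d))) (⋃ a ∈ S, closedBall a (ρ/2)) := hvol.symm
          _ ≤ (volume : Measure (EuclideanSpace ℝ (Fin d))) (closedBall x (R + ρ/2)) := measure_mono hU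
          _ = ENNReal.ofReal ((R + ρ/2) ^ d) * v := by
              rw [Measure.addHaar_closedBall (volume : Measure (EuclideanSpace ℝ (Fin d))) x (by linarith), hfr]
      have hv0 : v ≠ 0 := (measure_ball_pos _ _ one_pos).ne'
      have hvt : v ≠ ⊤ := measure_ball_lt_top.ne
      rw [← mul_assoc] at hle
      have hle2 : (S.card : ℝ≥0∞) * ENNReal.ofReal ((ρ/2) ^ d)
          ≤ ENNReal.ofReal ((R + ρ/2) ^ d) :=
        (ENNReal.mul_le_mul_iff_left hv0 hvt).1 hle
      have hle3 : (S.card : ℝ) * (ρ/2) ^ d ≤ (R + ρ/2) ^ d := by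
        have := hle2
        rw [← ENNReal.ofReal_natCast, ← ENNReal.ofReal_mul (by positivity)] at this
        exact (ENNReal.ofReal_le_ofReal_iff (by positivity)).1 this
      have hle4 : (S.card : ℝ) * (ρ/2) ^ d ≤ (2*R) ^ d := by
        refine hle3.trans (pow_le_pow_left₀ (by linarith) (by linarith) d)
      have hpos : (0:ℝ) < (ρ/2) ^ d := by positivity
      have : (S.card : ℝ) ≤ (2*R) ^ d / (ρ/2) ^ d := by
        rw [le_div_iff₀ hpos]; exact hle4
      refine this.trans_eq ?_
      rw [← div_pow]
      congr 1
      field_simp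
      ring
    -- maximal separated set
    set 𝒮 : Set ℕ := {n : ℕ | ∃ S : Finset (EuclideanSpace ℝ (Fin d)), ↑S ⊆ closedBall x R ∧
      (∀ a ∈ S, ∀ b ∈ S, a ≠ b → ρ < dist a b) ∧ S.card = n} with h𝒮
    have h0 : 0 ∈ 𝒮 := ⟨∅, by simp, by simp, rfl⟩
    have hbdd : BddAbove 𝒮 := by
      refine ⟨⌈(4 * R / ρ) ^ d⌉₊, ?_⟩
      rintro n ⟨S, hS1, hS2, rfl⟩
      calc S.card = ⌈(S.card : ℝ)⌉₊ := by simp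
        _ ≤ ⌈(4 * R / ρ) ^ d⌉₊ := Nat.ceil_le_ceil (hsepbound S hS1 hS2)
    obtain ⟨S, hS1, hS2, hScard⟩ := Nat.sSup_mem ⟨0, h0⟩ hbdd
    refine ⟨S, ?_, ?_⟩
    · -- maximality gives cover
      intro y hy
      by_contra hcon
      have hysep : ∀ a ∈ S, ρ < dist y a := by
        intro a ha
        by_contra h
        push_neg at h
        exact hcon (Set.mem_iUnion₂.2 ⟨a, ha, mem_closedBall.2 h⟩)
      have hyS : y ∉ S := by
        intro hyS
        have := hysep y hyS
        simp at this
        linarith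
      have hmem : S.card + 1 ∈ 𝒮 := by
        refine ⟨insert y S, ?_, ?_, ?_⟩
        · intro z hz
          simp only [Finset.coe_insert, Set.mem_insert_iff] at hz
          rcases hz with h | h
          · rw [h]; exact hy
          · exact hS1 h
        · intro a ha b hb hab
          simp only [Finset.mem_insert] at ha hb
          rcases ha with rfl | ha <;> rcases hb with rfl | hb
          · exact absurd rfl hab
          · exact hysep b hb
          · rw [dist_comm]; exact hysep a ha
          · exact hS2 a ha b hb hab
        · rw [Finset.card_insert_of_notMem hyS]
      have := le_csSup hbdd hmem
      rw [hScard] at this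
      omega
    · have h1 := hsepbound S hS1 hS2
      rw [hScard] at h1
      rw [hScard]
      refine h1.trans ?_
      have hmax : max 1 (R/ρ) = R/ρ := max_eq_right (le_of_lt ((one_lt_div hρ).2 hρR))
      rw [hmax]
      have : (4 * R / ρ) ^ d = 4 ^ d * (R/ρ) ^ d := by
        rw [← mul_pow]; congr 1; ring
      rw [this]

def asSet (θ : ℝ) (F : Set X) : Set ℝ :=
  {s : ℝ | 0 ≤ s ∧ ∃ C > (0 : ℝ), ∀ R : ℝ, 0 < R → R < 1 → ∀ x ∈ F,
    (coveringNumber (R ^ (1 / θ)) (closedBall x R ∩ F) : ℝ≥0∞)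
      ≤ ENNReal.ofReal (C * (R / R ^ (1 / θ)) ^ s)}

def upSet (θ : ℝ) (F : Set X) : Set ℝ :=
  {s : ℝ | 0 ≤ s ∧ ∃ C > (0 : ℝ), ∀ r R : ℝ, 0 < r → r ≤ R ^ (1 / θ) →
    R ^ (1 / θ) < R → R < 1 → 0 < R → ∀ x ∈ F,
    (coveringNumber r (closedBall x R ∩ F) : ℝ≥0∞) ≤ ENNReal.ofReal (C * (R / r) ^ s)}

lemma assouadSpectrum_eq (θ : ℝ) (F : Set X) : assouadSpectrum θ F = sInf (asSet θ F) := rfl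

lemma upperSpectrum_eq (θ : ℝ) (F : Set X) : upperSpectrum θ F = sInf (upSet θ F) := rfl

lemma bddBelow_asSet (θ : ℝ) (F : Set X) : BddBelow (asSet θ F) := ⟨0, fun _ hs => hs.1⟩

lemma bddBelow_upSet (θ : ℝ) (F : Set X) : BddBelow (upSet θ F) := ⟨0, fun _ hs => hs.1⟩

lemma assouadSpectrum_nonneg (θ : ℝ) (F : Set X) : 0 ≤ assouadSpectrum θ F :=
  Real.sInf_nonneg fun _ hs => hs.1

lemma upperSpectrum_nonneg (θ : ℝ) (F : Set X) : 0 ≤ upperSpectrum θ F :=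
  Real.sInf_nonneg fun _ hs => hs.1

lemma upSet_subset_asSet {θ' θ : ℝ} (h0 : 0 < θ') (h01 : θ' ≤ θ) (h1 : θ < 1) (F : Set X) :
    upSet θ F ⊆ asSet θ' F := by
  rintro s ⟨hs0, C, hC, hbd⟩
  refine ⟨hs0, C, hC, ?_⟩
  intro R hR0 hR1 x hx
  have hθ0 : 0 < θ := lt_of_lt_of_le h0 h01
  have h1d : R ^ (1/θ') ≤ R ^ (1/θ) :=
    Real.rpow_le_rpow_of_exponent_ge hR0 hR1.le (one_div_le_one_div_of_le h0 h01)
  have h2 : R ^ (1/θ) < R := by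
    have := Real.rpow_lt_rpow_of_exponent_gt hR0 hR1 (one_lt_one_div hθ0 h1)
    simpa [Real.rpow_one] using this
  exact hbd (R ^ (1/θ')) R (Real.rpow_pos_of_pos hR0 _) h1d h2 hR1 hR0 x hx

lemma upSet_mono {θ θ₁ : ℝ} (h0 : 0 < θ) (h01 : θ ≤ θ₁) (h1 : θ₁ < 1) (F : Set X) :
    upSet θ₁ F ⊆ upSet θ F := by
  rintro s ⟨hs0, C, hC, hbd⟩
  refine ⟨hs0, C, hC, ?_⟩
  intro r R hr hrle hlt hR1 hR0 x hx
  have hθ₁0 : 0 < θ₁ := lt_of_lt_of_le h0 h01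
  have key : r ≤ R ^ (1/θ₁) :=
    hrle.trans (Real.rpow_le_rpow_of_exponent_ge hR0 hR1.le (one_div_le_one_div_of_le h0 h01))
  have h2 : R ^ (1/θ₁) < R := by
    have := Real.rpow_lt_rpow_of_exponent_gt hR0 hR1 (one_lt_one_div hθ₁0 h1)
    simpa [Real.rpow_one] using this
  exact hbd r R hr key h2 hR1 hR0 x hx

/-- Covering `closedBall x R ∩ F` by `2ρ`-balls centred in `F`. -/
lemma cover_inter_F {d : ℕ} (F : Set (EuclideanSpace ℝ (Fin d)))
    (x : EuclideanSpace ℝ (Fin d)) {R ρ : ℝ} (hρ : 0 < ρ) (hR : 0 < R) :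
    ∃ t : Finset (EuclideanSpace ℝ (Fin d)), ↑t ⊆ F ∧
      (closedBall x R ∩ F ⊆ ⋃ y ∈ t, closedBall y (2 * ρ)) ∧
      (t.card : ℝ) ≤ 4 ^ d * (max 1 (R / ρ)) ^ d := by
  obtain ⟨t, ht, hc⟩ := euclidean_cover d x hρ hR
  obtain ⟨t', ht'F, ht'cov, ht'card⟩ :=
    recenter_cover hρ.le (Set.inter_subset_right (s := closedBall x R) (t := F))
      ((Set.inter_subset_left).trans ht)
  refine ⟨t', ht'F, ht'cov, le_trans ?_ hc⟩
  exact_mod_cast ht'card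

lemma coveringNumber_inter_le {d : ℕ} (F : Set (EuclideanSpace ℝ (Fin d)))
    (x : EuclideanSpace ℝ (Fin d)) {r R : ℝ} (hr : 0 < r) (hrR : r ≤ R) :
    (coveringNumber r (closedBall x R ∩ F) : ℝ≥0∞)
      ≤ ENNReal.ofReal (8 ^ d * (R / r) ^ (d:ℝ)) := by
  obtain ⟨t, -, hcov, hcard⟩ := cover_inter_F F x (ρ := r/2) (by linarith) (lt_of_lt_of_le hr hrR)
  refine coveringNumber_le_ofReal ⟨t, ?_, ?_⟩
  · have : 2 * (r/2) = r := by ring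
    rwa [this] at hcov
  · refine hcard.trans ?_
    have h1 : (1:ℝ) ≤ R / (r/2) := by
      rw [le_div_iff₀ (by linarith)]; linarith
    rw [max_eq_right h1]
    have h2 : R / (r/2) = 2 * (R/r) := by field_simp
    rw [h2, mul_pow, ← mul_assoc, Real.rpow_natCast]
    have : (4:ℝ)^d * 2^d = 8^d := by rw [← mul_pow]; norm_num
    rw [this]

lemma d_mem_asSet {d : ℕ} (F : Set (EuclideanSpace ℝ (Fin d))) {θ₁ : ℝ}
    (hθ : θ₁ ∈ Set.Ioo (0:ℝ) 1) : ((d:ℝ)) ∈ asSet θ₁ F := by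
  refine ⟨Nat.cast_nonneg d, 8 ^ d, by positivity, ?_⟩
  intro R hR0 hR1 x _
  have h1θ : 1 < 1/θ₁ := one_lt_one_div hθ.1 hθ.2
  have hrle : R ^ (1/θ₁) ≤ R := by
    have := Real.rpow_lt_rpow_of_exponent_gt hR0 hR1 h1θ
    rw [Real.rpow_one] at this
    exact this.le
  exact coveringNumber_inter_le F x (Real.rpow_pos_of_pos hR0 _) hrle

lemma d_mem_upSet {d : ℕ} (F : Set (EuclideanSpace ℝ (Fin d))) {θ₁ : ℝ}
    (hθ : θ₁ ∈ Set.Ioo (0:ℝ) 1) : ((d:ℝ)) ∈ upSet θ₁ F := by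
  refine ⟨Nat.cast_nonneg d, 8 ^ d, by positivity, ?_⟩
  intro r R hr hrle hlt _ _ x _
  exact coveringNumber_inter_le F x hr (hrle.trans hlt.le)


/-- Geometric-type sum bound. -/
lemma geomIcc {c : ℝ} (hc0 : 0 ≤ c) (hc1 : c < 1) :
    ∀ K : ℕ, ∑ i ∈ Finset.Icc 1 K, c ^ (K - i) ≤ 1 / (1 - c) := by
  intro K
  induction K with
  | zero =>
    have : Finset.Icc 1 0 = (∅ : Finset ℕ) := by
      apply Finset.Icc_eq_empty; omega
    rw [this, Finset.sum_empty]
    have : (0:ℝ) < 1 - c := by linarith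
    positivity
  | succ n ih =>
    rw [Finset.sum_Icc_succ_top (by omega)]
    have h1 : ∑ i ∈ Finset.Icc 1 n, c ^ (n + 1 - i) = c * ∑ i ∈ Finset.Icc 1 n, c ^ (n - i) := by
      rw [Finset.mul_sum]
      apply Finset.sum_congr rfl
      intro i hi
      have hin : i ≤ n := (Finset.mem_Icc.1 hi).2
      have : n + 1 - i = (n - i) + 1 := by omega
      rw [this, pow_succ]
      ring
    rw [h1]
    have h2 : c * ∑ i ∈ Finset.Icc 1 n, c ^ (n - i) ≤ c * (1 / (1 - c)) :=
      mul_le_mul_of_nonneg_left ih hc0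
    have h3 : c ^ (n + 1 - (n + 1)) = 1 := by simp
    rw [h3]
    have h4 : c * (1 / (1 - c)) + 1 = 1 / (1 - c) := by
      have : (1:ℝ) - c ≠ 0 := by linarith
      field_simp
      ring
    linarith

/-- Polylog is dominated by any positive power. -/
lemma polylog {h : ℝ} (hh : 0 ≤ h) {ε : ℝ} (hε : 0 < ε) :
    ∃ Cp : ℝ, 0 < Cp ∧ ∀ y : ℝ, 1 ≤ y → (1 + Real.log y) ^ h ≤ Cp * y ^ ε := by
  set m : ℝ := ε / (h + 1) with hm
  have hm0 : 0 < m := by positivity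
  refine ⟨(1 + 1/m) ^ h, Real.rpow_pos_of_pos (by positivity) _, ?_⟩
  intro y hy
  have hy0 : 0 < y := lt_of_lt_of_le one_pos hy
  have hlogy : 0 ≤ Real.log y := Real.log_nonneg hy
  have hym : 1 ≤ y ^ m := Real.one_le_rpow hy hm0.le
  have hlog : Real.log y ≤ y ^ m / m := by
    have h1 : Real.log (y ^ m) ≤ y ^ m - 1 :=
      Real.log_le_sub_one_of_pos (Real.rpow_pos_of_pos hy0 m)
    rw [Real.log_rpow hy0] at h1
    rw [le_div_iff₀ hm0]
    nlinarith
  have hstep : 1 + Real.log y ≤ (1 + 1/m) * y ^ m := by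
    have hdd : (1 + 1/m) * y ^ m = y ^ m + y ^ m / m := by
      field_simp
    rw [hdd]
    linarith
  have h2 : (1 + Real.log y) ^ h ≤ ((1 + 1/m) * y ^ m) ^ h :=
    Real.rpow_le_rpow (by linarith) hstep hh
  refine h2.trans ?_
  rw [Real.mul_rpow (by positivity) (by positivity)]
  gcongr ?_ * ?_
  · rw [← Real.rpow_mul hy0.le]
    refine Real.rpow_le_rpow_of_exponent_le hy ?_
    rw [hm, div_mul_eq_mul_div, div_le_iff₀ (by positivity)]
    nlinarith

/-- The key iteration lemma: from the Assouad-spectrum bound at `θ'` we get a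
uniform covering bound for all `r ≤ R^{1/θ}`, with exponent
`s(1-θ')/((1-θ'')(1-θ)) + ε`. -/
lemma big_lemma {d : ℕ} (F : Set (EuclideanSpace ℝ (Fin d))) {θ θ' θ'' s C : ℝ}
    (hθ : θ ∈ Set.Ioo (0:ℝ) 1) (hθ'0 : 0 < θ') (hθ'θ'' : θ' < θ'') (hθ''1 : θ'' < 1)
    (hs : 0 ≤ s) (hC : 1 ≤ C)
    (hbd : ∀ R : ℝ, 0 < R → R < 1 → ∀ x ∈ F,
      (coveringNumber (R ^ (1 / θ')) (closedBall x R ∩ F) : ℝ≥0∞)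
        ≤ ENNReal.ofReal (C * (R / R ^ (1 / θ')) ^ s))
    {ε : ℝ} (hε : 0 < ε) :
    (s * (1 - θ') / ((1 - θ'') * (1 - θ)) + ε) ∈ upSet θ F := by
  obtain ⟨hθ0, hθ1⟩ := hθ
  have hθ''0 : 0 < θ'' := hθ'0.trans hθ'θ''
  have hδ : 0 < θ'' - θ' := by linarith
  have hC0 : 0 < C := lt_of_lt_of_le one_pos hC
  set q : ℝ := (1 - θ') * s with hq
  have hq0 : 0 ≤ q := by
    have : 0 < 1 - θ' := by linarith
    positivity
  set t₁ : ℝ := s * (1 - θ') / ((1 - θ'') * (1 - θ)) with ht₁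
  have h1θ'' : 0 < 1 - θ'' := by linarith
  have h1θ : 0 < 1 - θ := by linarith
  have h1θ' : 0 < 1 - θ' := by linarith
  have ht₁0 : 0 ≤ t₁ := by positivity
  -- the threshold constant
  set c₀ : ℝ := (2:ℝ) ^ (-(1/(θ'' - θ'))) with hc₀
  have hc₀0 : 0 < c₀ := Real.rpow_pos_of_pos (by norm_num) _
  have hc₀1 : c₀ < 1 :=
    Real.rpow_lt_one_of_one_lt_of_neg (by norm_num) (by rw [neg_lt, neg_zero]; positivity)
  have hc₀half : c₀ ^ (θ'' - θ') = 1/2 := by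
    rw [hc₀, ← Real.rpow_mul (by norm_num)]
    have : -(1/(θ'' - θ')) * (θ'' - θ') = -1 := by field_simp
    rw [this, Real.rpow_neg (by norm_num), Real.rpow_one]
    norm_num
  set L₀ : ℝ := -Real.log c₀ with hL₀def
  have hL₀ : 0 < L₀ := by
    rw [hL₀def, neg_pos]
    exact Real.log_neg hc₀0 hc₀1
  set h : ℝ := Real.log C / Real.log (1/θ'') with hhdef
  have hlogθ'' : 0 < Real.log (1/θ'') :=
    Real.log_pos (one_lt_one_div hθ''0 hθ''1)
  have hh0 : 0 ≤ h := div_nonneg (Real.log_nonneg hC) hlogθ''.le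
  obtain ⟨Cp, hCp0, hCp⟩ := polylog hh0 hε
  set B₂ : ℝ := (Real.log 2 + 1/(1 - θ)) / L₀ with hB₂def
  have hlog2 : 0 < Real.log 2 := Real.log_pos (by norm_num)
  have hB₂0 : 0 < B₂ := by
    rw [hB₂def]
    positivity
  set A₁ : ℝ := (4:ℝ)^d * (2/c₀)^d with hA₁def
  have hA₁0 : 0 < A₁ := by positivity
  set q1 : ℝ := q / (1 - θ'') with hq1def
  have hq10 : 0 ≤ q1 := by positivity
  set CA : ℝ := (8:ℝ)^d * (1/(2*c₀)) ^ (d:ℝ) with hCAdef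
  have hCA0 : 0 < CA := by
    have := Real.rpow_pos_of_pos (show (0:ℝ) < 1/(2*c₀) by positivity) (d:ℝ)
    positivity
  set CB : ℝ := A₁ * (C * (B₂ ^ h * Cp)) * (2:ℝ) ^ q1 with hCBdef
  have hCB0 : 0 < CB := by
    have h1 := Real.rpow_pos_of_pos (show (0:ℝ) < B₂ from hB₂0) h
    have h2 := Real.rpow_pos_of_pos (show (0:ℝ) < 2 by norm_num) q1
    positivity
  refine ⟨by positivity, max CA CB, lt_max_of_lt_left hCA0, ?_⟩
  intro r R hr hrle hlt hR1 hR0 x hx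
  have hrR : r < R := lt_of_le_of_lt hrle hlt
  have hr1 : r < 1 := hrR.trans hR1
  set y : ℝ := R / r with hydef
  have hy1 : 1 < y := (one_lt_div hr).2 hrR
  have hy0 : 0 < y := lt_trans one_pos hy1
  have hylog : 0 ≤ Real.log y := Real.log_nonneg hy1.le
  have hyt : (1:ℝ) ≤ y ^ (t₁ + ε) := Real.one_le_rpow hy1.le (by positivity)
  -- key scale inequality: θ log r ≤ log R
  have hkey : θ * Real.log r ≤ Real.log R := by
    have h1 : Real.log r ≤ Real.log (R ^ (1/θ)) := Real.log_le_log hr hrle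
    rw [Real.log_rpow hR0] at h1
    have h2 := mul_le_mul_of_nonneg_left h1 hθ0.le
    calc θ * Real.log r ≤ θ * (1/θ * Real.log R) := h2
      _ = Real.log R := by field_simp
  have hlogy : Real.log y = Real.log R - Real.log r := Real.log_div hR0.ne' hr.ne'
  have hkey2 : -Real.log r ≤ Real.log y / (1 - θ) := by
    rw [le_div_iff₀ h1θ, hlogy]
    linarith only [hkey]
  rcases lt_or_ge c₀ (r/2) with hA | hB
  · -- easy case: r is comparable to a constant
    have h1 := coveringNumber_inter_le F x hr hrR.le
    refine h1.trans (ENNReal.ofReal_le_ofReal ?_)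
    have hyA : y ≤ 1/(2*c₀) := by
      rw [hydef, div_le_div_iff₀ hr (by positivity)]
      have e1 : R*(2*c₀) ≤ 1*(2*c₀) := mul_le_mul_of_nonneg_right hR1.le (by positivity)
      linarith only [e1, hA]
    calc (8:ℝ)^d * (R/r) ^ (d:ℝ)
        ≤ (8:ℝ)^d * (1/(2*c₀)) ^ (d:ℝ) := by
          refine mul_le_mul_of_nonneg_left ?_ (by positivity)
          exact Real.rpow_le_rpow (by positivity) hyA (Nat.cast_nonneg d)
      _ = CA := rfl
      _ ≤ CA * y ^ (t₁ + ε) := le_mul_of_one_le_right hCA0.le hyt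
      _ ≤ max CA CB * y ^ (t₁ + ε) := by
          gcongr
          exact le_max_left _ _
  · -- main case: iterate
    set L : ℝ := Real.log (2/r) with hLdef
    have hr2 : 0 < r/2 := by linarith
    have hr21 : r/2 < 1 := by linarith
    have hL₀L : L₀ ≤ L := by
      have h1 : 1/c₀ ≤ 2/r := by
        rw [div_le_div_iff₀ hc₀0 hr]
        linarith only [hB]
      have h2 := Real.log_le_log (by positivity) h1
      rw [Real.log_div one_ne_zero hc₀0.ne'] at h2
      rw [hL₀def, hLdef]
      simp only [Real.log_one, zero_sub] at h2
      linarith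
    have hL0 : 0 < L := lt_of_lt_of_le hL₀ hL₀L
    have hlogr2 : Real.log (r/2) = -L := by
      rw [hLdef, Real.log_div hr.ne' two_ne_zero, Real.log_div two_ne_zero hr.ne']
      ring
    have hLval : L = Real.log 2 - Real.log r := by
      rw [hLdef, Real.log_div two_ne_zero hr.ne']
    set xs : ℝ := Real.log (L/L₀) / Real.log (1/θ'') with hxsdef
    have hLL₀1 : (1:ℝ) ≤ L/L₀ := (one_le_div hL₀).2 hL₀L
    have hxs0 : 0 ≤ xs := div_nonneg (Real.log_nonneg hLL₀1) hlogθ''.le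
    set K : ℕ := ⌊xs⌋₊ + 1 with hKdef
    set σ : ℕ → ℝ := fun j => (r/2) ^ ((θ'' ^ (K - j) : ℝ)) with hσdef
    have hσpos : ∀ j, 0 < σ j := fun j => Real.rpow_pos_of_pos hr2 _
    have hσlt1 : ∀ j, σ j < 1 := fun j => Real.rpow_lt_one hr2.le hr21 (by positivity)
    have hc₀eq : (r/2) ^ (L₀/L) = c₀ := by
      rw [Real.rpow_def_of_pos hr2, hlogr2]
      have h1 : -L * (L₀/L) = -L₀ := by
        field_simp
      have h2 : -L₀ = Real.log c₀ := by rw [hL₀def]; ring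
      rw [h1, h2, Real.exp_log hc₀0]
    have hlogθ''neg : Real.log θ'' < 0 := Real.log_neg hθ''0 hθ''1
    have hlogθ''eq : Real.log (1/θ'') = -Real.log θ'' := by
      rw [one_div, Real.log_inv]
    have hθxs : (θ'':ℝ) ^ xs = L₀ / L := by
      rw [Real.rpow_def_of_pos hθ''0]
      have h1 : Real.log θ'' * xs = -Real.log (L/L₀) := by
        rw [hxsdef, hlogθ''eq]
        rw [div_neg, mul_neg, mul_div_assoc']
        rw [mul_comm, mul_div_assoc, div_self hlogθ''neg.ne, mul_one]
      rw [h1, Real.exp_neg, Real.exp_log (by positivity), inv_div]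
    have hKm1 : K - 1 = ⌊xs⌋₊ := by omega
    have he1 : L₀/L ≤ ((θ'' ^ (K-1) : ℝ)) := by
      rw [hKm1, ← Real.rpow_natCast θ'' ⌊xs⌋₊, ← hθxs]
      exact Real.rpow_le_rpow_of_exponent_ge hθ''0 hθ''1.le (Nat.floor_le hxs0)
    have hσ1le : σ 1 ≤ c₀ := by
      rw [← hc₀eq, hσdef]
      exact Real.rpow_le_rpow_of_exponent_ge hr2 hr21.le he1
    have he2 : ((θ'' ^ K : ℝ)) ≤ L₀/L := by
      rw [← Real.rpow_natCast θ'' K, ← hθxs]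
      refine (Real.rpow_lt_rpow_of_exponent_gt hθ''0 hθ''1 ?_).le
      rw [hKdef]; push_cast
      exact Nat.lt_floor_add_one xs
    have hσ1θ'' : (σ 1) ^ (θ'' : ℝ) = (r/2) ^ ((θ'' ^ K : ℝ)) := by
      rw [hσdef]
      simp only
      rw [← Real.rpow_mul hr2.le]
      congr 1
    have hc₀σ1 : c₀ ≤ (σ 1) ^ θ' := by
      have h1 : c₀ ≤ (σ 1) ^ (θ'':ℝ) := by
        rw [hσ1θ'', ← hc₀eq]
        exact Real.rpow_le_rpow_of_exponent_ge hr2 hr21.le he2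
      exact h1.trans (Real.rpow_le_rpow_of_exponent_ge (hσpos 1) (hσlt1 1).le hθ'θ''.le)
    have hσmono1 : ∀ j, 1 ≤ j → σ j ≤ c₀ := by
      intro j hj
      refine le_trans ?_ hσ1le
      rw [hσdef]
      simp only
      refine Real.rpow_le_rpow_of_exponent_ge hr2 hr21.le ?_
      exact pow_le_pow_of_le_one hθ''0.le hθ''1.le (by omega)
    have hσsucc : ∀ j, j < K → σ j = (σ (j+1)) ^ (θ'':ℝ) := by
      intro j hj
      rw [hσdef]
      simp only
      rw [← Real.rpow_mul hr2.le]
      congr 1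
      have h1 : K - j = (K - (j+1)) + 1 := by omega
      rw [h1, pow_succ]
    have hstepcond : ∀ j, 1 ≤ j → j < K → 2 * σ j ≤ (σ (j+1)) ^ θ' := by
      intro j hj hjK
      have hw : (σ (j+1)) ^ (θ'' - θ') ≤ 1/2 := by
        rw [← hc₀half]
        exact Real.rpow_le_rpow (hσpos _).le (hσmono1 (j+1) (by omega)) hδ.le
      have hw0 : 0 < (σ (j+1)) ^ (θ'' - θ') := Real.rpow_pos_of_pos (hσpos _) _
      have hsplit : (σ (j+1)) ^ θ' = σ j / (σ (j+1)) ^ (θ'' - θ') := by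
        rw [hσsucc j hjK, ← Real.rpow_sub (hσpos (j+1))]
        congr 1
        ring
      rw [hsplit, le_div_iff₀ hw0]
      have e1 := mul_le_mul_of_nonneg_left hw (hσpos j).le
      linarith only [e1]
    -- one covering step
    have hSTEP : ∀ (t : Finset (EuclideanSpace ℝ (Fin d))) (ρ M : ℝ) (j : ℕ),
        ↑t ⊆ F → (closedBall x R ∩ F ⊆ ⋃ z ∈ t, closedBall z ρ) → 0 < ρ →
        ρ ≤ (σ j) ^ θ' → (t.card : ℝ) ≤ M → 0 ≤ M →
        ∃ t' : Finset (EuclideanSpace ℝ (Fin d)), ↑t' ⊆ F ∧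
          (closedBall x R ∩ F ⊆ ⋃ z ∈ t', closedBall z (2 * σ j)) ∧
          (t'.card : ℝ) ≤ M * (C * (σ j) ^ (-q)) := by
      intro t ρ M j htF hcov hρ0 hρσ hcard hM0
      have hσjq : 0 < (σ j) ^ (-q) := Real.rpow_pos_of_pos (hσpos j) _
      have hcq0 : (0:ℝ) ≤ C * (σ j) ^ (-q) := by positivity
      have SL : ∀ z ∈ t, ∃ u : Finset (EuclideanSpace ℝ (Fin d)), ↑u ⊆ F ∧
          (closedBall z ρ ∩ F ⊆ ⋃ w ∈ u, closedBall w (2 * σ j)) ∧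
          (u.card : ℝ) ≤ C * (σ j) ^ (-q) := by
        intro z hz
        have hR'0 : 0 < (σ j) ^ θ' := Real.rpow_pos_of_pos (hσpos j) _
        have hR'1 : (σ j) ^ θ' < 1 := Real.rpow_lt_one (hσpos j).le (hσlt1 j) hθ'0
        have hkeyr : ((σ j) ^ θ') ^ (1/θ') = σ j := by
          rw [← Real.rpow_mul (hσpos j).le, mul_one_div_cancel hθ'0.ne', Real.rpow_one]
        have hb := hbd ((σ j) ^ θ') hR'0 hR'1 z (htF hz)
        rw [hkeyr] at hb
        have hratio : ((σ j) ^ θ' / σ j) ^ s = (σ j) ^ (-q) := by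
          have h1 : (σ j) ^ θ' / σ j = (σ j) ^ (θ' - 1) := by
            rw [Real.rpow_sub (hσpos j), Real.rpow_one]
          rw [h1, ← Real.rpow_mul (hσpos j).le]
          congr 1
          rw [hq]
          ring
        rw [hratio] at hb
        obtain ⟨u₀, hu₀cov, hu₀card⟩ := exists_cover_of_coveringNumber_le hcq0 hb
        obtain ⟨u, huF, hucov, hucard⟩ :=
          recenter_cover (hσpos j).le Set.inter_subset_right hu₀cov
        refine ⟨u, huF, ?_, le_trans (by exact_mod_cast hucard) hu₀card⟩
        refine subset_trans ?_ hucov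
        exact Set.inter_subset_inter_left _ (closedBall_subset_closedBall hρσ)
      classical
      choose u hu1 hu2 hu3 using SL
      refine ⟨t.attach.biUnion (fun z => u z.1 z.2), ?_, ?_, ?_⟩
      · intro w hw
        simp only [Finset.coe_biUnion, Finset.mem_coe, Set.mem_iUnion] at hw
        obtain ⟨z, hz, hzw⟩ := hw
        exact hu1 z.1 z.2 hzw
      · intro a ha
        obtain ⟨z, hz, haz⟩ := Set.mem_iUnion₂.1 (hcov ha)
        obtain ⟨w, hw, haw⟩ := Set.mem_iUnion₂.1 (hu2 z hz ⟨haz, ha.2⟩)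
        refine Set.mem_iUnion₂.2 ⟨w, ?_, haw⟩
        exact Finset.mem_biUnion.2 ⟨⟨z, hz⟩, Finset.mem_attach _ _, hw⟩
      · calc ((t.attach.biUnion fun z => u z.1 z.2).card : ℝ)
            ≤ ∑ z ∈ t.attach, ((u z.1 z.2).card : ℝ) := by
              exact_mod_cast Finset.card_biUnion_le
          _ ≤ ∑ _z ∈ t.attach, (C * (σ j) ^ (-q)) :=
              Finset.sum_le_sum (fun z _ => hu3 z.1 z.2)
          _ = (t.card : ℝ) * (C * (σ j) ^ (-q)) := by
              rw [Finset.sum_const, Finset.card_attach, nsmul_eq_mul]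
          _ ≤ M * (C * (σ j) ^ (-q)) := mul_le_mul_of_nonneg_right hcard hcq0
    -- step 0
    obtain ⟨t₀, ht₀F, ht₀cov, ht₀card⟩ := cover_inter_F F x (ρ := c₀/2) (by positivity) hR0
    rw [show 2 * (c₀/2) = c₀ by ring] at ht₀cov
    have ht₀A : (t₀.card : ℝ) ≤ A₁ := by
      refine ht₀card.trans ?_
      rw [hA₁def]
      refine mul_le_mul_of_nonneg_left ?_ (by positivity)
      refine pow_le_pow_left₀ (le_trans zero_le_one (le_max_left _ _)) ?_ d
      refine max_le ?_ ?_
      · rw [le_div_iff₀ hc₀0]; linarith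
      · rw [div_le_div_iff₀ (by positivity) hc₀0]
        have e1 : R*c₀ ≤ 1*c₀ := mul_le_mul_of_nonneg_right hR1.le hc₀0.le
        linarith only [e1]
    -- the chain of covers
    have hchain : ∀ j : ℕ, 1 ≤ j → j ≤ K →
        ∃ t : Finset (EuclideanSpace ℝ (Fin d)), ↑t ⊆ F ∧
          (closedBall x R ∩ F ⊆ ⋃ z ∈ t, closedBall z (2 * σ j)) ∧
          (t.card : ℝ) ≤ A₁ * ∏ i ∈ Finset.Icc 1 j, (C * (σ i) ^ (-q)) := by
      intro j
      induction j with
      | zero => omega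
      | succ n ih =>
        intro _ hnK
        rcases Nat.eq_zero_or_pos n with rfl | hn
        · obtain ⟨t', h1, h2, h3⟩ := hSTEP t₀ c₀ A₁ 1 ht₀F ht₀cov hc₀0 hc₀σ1 ht₀A hA₁0.le
          refine ⟨t', h1, h2, ?_⟩
          rw [show Finset.Icc 1 1 = {1} from Finset.Icc_self 1, Finset.prod_singleton]
          exact h3
        · obtain ⟨t, h1, h2, h3⟩ := ih (by omega) (by omega)
          have hMnn : (0:ℝ) ≤ A₁ * ∏ i ∈ Finset.Icc 1 n, (C * (σ i) ^ (-q)) := by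
            refine mul_nonneg hA₁0.le (Finset.prod_nonneg ?_)
            intro i _
            have := Real.rpow_pos_of_pos (hσpos i) (-q)
            positivity
          obtain ⟨t', g1, g2, g3⟩ := hSTEP t (2 * σ n) _ (n+1) h1 h2
            (by have := hσpos n; positivity) (hstepcond n hn (by omega)) h3 hMnn
          refine ⟨t', g1, g2, ?_⟩
          rw [Finset.prod_Icc_succ_top (by omega), ← mul_assoc]
          exact g3
    obtain ⟨tK, -, hcovK, hcardK⟩ := hchain K (by omega) le_rfl
    have hfinal : 2 * σ K = r := by
      rw [hσdef]
      simp only [Nat.sub_self, pow_zero, Real.rpow_one]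
      ring
    rw [hfinal] at hcovK
    refine (coveringNumber_le_ofReal ⟨tK, hcovK, hcardK⟩).trans (ENNReal.ofReal_le_ofReal ?_)
    -- analytic estimate
    have hprodsplit : ∏ i ∈ Finset.Icc 1 K, (C * (σ i) ^ (-q))
        = C ^ K * ∏ i ∈ Finset.Icc 1 K, (σ i) ^ (-q) := by
      rw [Finset.prod_mul_distrib, Finset.prod_const, Nat.card_Icc]
      congr 2
    have hexpeq : ∀ i : ℕ, (σ i) ^ (-q) = Real.exp (q * ((θ'' ^ (K - i) : ℝ)) * L) := by
      intro i
      rw [hσdef]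
      simp only
      rw [← Real.rpow_mul hr2.le, Real.rpow_def_of_pos hr2, hlogr2]
      congr 1
      ring
    have hsum : ∑ i ∈ Finset.Icc 1 K, q * ((θ'' ^ (K - i):ℝ)) * L ≤ q1 * L := by
      have h1 : ∑ i ∈ Finset.Icc 1 K, q * ((θ'' ^ (K - i):ℝ)) * L
          = (q * L) * ∑ i ∈ Finset.Icc 1 K, ((θ'' ^ (K - i):ℝ)) := by
        rw [Finset.mul_sum]
        exact Finset.sum_congr rfl (fun i _ => by ring)
      rw [h1, hq1def]
      calc (q*L) * ∑ i ∈ Finset.Icc 1 K, ((θ'' ^ (K - i):ℝ))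
          ≤ (q*L) * (1/(1-θ'')) :=
            mul_le_mul_of_nonneg_left (geomIcc hθ''0.le hθ''1 K) (by positivity)
        _ = q/(1-θ'') * L := by ring
    have hprodle : ∏ i ∈ Finset.Icc 1 K, (σ i) ^ (-q) ≤ Real.exp (q1 * L) := by
      have h1 : ∏ i ∈ Finset.Icc 1 K, (σ i) ^ (-q)
          = Real.exp (∑ i ∈ Finset.Icc 1 K, q * ((θ'' ^ (K - i):ℝ)) * L) := by
        rw [Real.exp_sum]
        exact Finset.prod_congr rfl (fun i _ => hexpeq i)
      rw [h1, Real.exp_le_exp]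
      exact hsum
    have hq1t₁ : q1 * (Real.log y / (1-θ)) = t₁ * Real.log y := by
      have hne1 : (1-θ'') ≠ 0 := h1θ''.ne'
      have hne2 : (1-θ) ≠ 0 := h1θ.ne'
      rw [ht₁, hq1def, hq, div_eq_mul_inv, div_eq_mul_inv, div_eq_mul_inv, mul_inv]
      ring
    have hexpL : Real.exp (q1 * L) ≤ (2:ℝ) ^ q1 * y ^ t₁ := by
      have h2 : q1 * L = q1 * Real.log 2 + q1 * (-Real.log r) := by rw [hLval]; ring
      have h3 : q1 * (-Real.log r) ≤ t₁ * Real.log y := by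
        have h4 := mul_le_mul_of_nonneg_left hkey2 hq10
        exact h4.trans (le_of_eq hq1t₁)
      calc Real.exp (q1*L) = Real.exp (q1*Real.log 2) * Real.exp (q1*(-Real.log r)) := by
            rw [← Real.exp_add, ← h2]
        _ ≤ Real.exp (q1*Real.log 2) * Real.exp (t₁ * Real.log y) :=
            mul_le_mul_of_nonneg_left (Real.exp_le_exp.2 h3) (Real.exp_pos _).le
        _ = 2 ^ q1 * y ^ t₁ := by
            rw [Real.rpow_def_of_pos (by norm_num : (0:ℝ) < 2), Real.rpow_def_of_pos hy0]
            ring_nf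
    have hCK : (C:ℝ) ^ K ≤ C * (B₂ ^ h * (Cp * y ^ ε)) := by
      have h1 : (C:ℝ)^K = C ^ ((K:ℝ)) := (Real.rpow_natCast C K).symm
      have h2 : ((K:ℝ)) ≤ xs + 1 := by
        rw [hKdef]
        push_cast
        linarith [Nat.floor_le hxs0]
      have h3 : C ^ ((K:ℝ)) ≤ C ^ (xs + 1) := Real.rpow_le_rpow_of_exponent_le hC h2
      have h4 : C ^ (xs + 1) = C ^ xs * C := by rw [Real.rpow_add hC0, Real.rpow_one]
      have h5 : C ^ xs = (L/L₀) ^ h := by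
        rw [Real.rpow_def_of_pos hC0, Real.rpow_def_of_pos (by positivity : (0:ℝ) < L/L₀)]
        congr 1
        rw [hxsdef, hhdef]
        field_simp
      have h7 : L ≤ Real.log 2 + Real.log y / (1-θ) := by
        rw [hLval]
        linarith [hkey2]
      have h6 : (L/L₀) ^ h ≤ (B₂ * (1 + Real.log y)) ^ h := by
        refine Real.rpow_le_rpow (by positivity) ?_ hh0
        rw [hB₂def, div_mul_eq_mul_div, div_le_div_iff_of_pos_right hL₀]
        have hpr : 0 ≤ Real.log 2 * Real.log y := mul_nonneg hlog2.le hylog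
        have hfr : 0 < 1/(1-θ) := by positivity
        have expand : (Real.log 2 + 1/(1-θ)) * (1 + Real.log y)
            = Real.log 2 + Real.log 2 * Real.log y + 1/(1-θ) + Real.log y/(1-θ) := by ring
        rw [expand]
        linarith only [h7, hpr, hfr]
      have h8 : (B₂ * (1 + Real.log y)) ^ h = B₂ ^ h * (1 + Real.log y) ^ h :=
        Real.mul_rpow hB₂0.le (by linarith)
      have h9 : (1 + Real.log y) ^ h ≤ Cp * y ^ ε := hCp y hy1.le
      have hB₂h : 0 < B₂ ^ h := Real.rpow_pos_of_pos hB₂0 _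
      calc (C:ℝ)^K = C ^ ((K:ℝ)) := h1
        _ ≤ C ^ xs * C := by rw [← h4]; exact h3
        _ = (L/L₀)^h * C := by rw [h5]
        _ ≤ (B₂^h * (Cp * y^ε)) * C := by
            refine mul_le_mul_of_nonneg_right ?_ hC0.le
            refine h6.trans ?_
            rw [h8]
            exact mul_le_mul_of_nonneg_left h9 hB₂h.le
        _ = C * (B₂^h * (Cp * y^ε)) := by ring
    have hprodnn : (0:ℝ) ≤ ∏ i ∈ Finset.Icc 1 K, (σ i) ^ (-q) :=
      Finset.prod_nonneg (fun i _ => (Real.rpow_pos_of_pos (hσpos i) _).le)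
    have hCBy : (0:ℝ) ≤ C * (B₂^h * (Cp * y^ε)) := by
      have h1 : 0 < B₂ ^ h := Real.rpow_pos_of_pos hB₂0 _
      have h2 : 0 < y ^ ε := Real.rpow_pos_of_pos hy0 _
      positivity
    calc A₁ * ∏ i ∈ Finset.Icc 1 K, (C * (σ i) ^ (-q))
        = A₁ * (C^K * ∏ i ∈ Finset.Icc 1 K, (σ i) ^ (-q)) := by rw [hprodsplit]
      _ ≤ A₁ * ((C * (B₂^h * (Cp * y^ε))) * Real.exp (q1 * L)) := by
          refine mul_le_mul_of_nonneg_left ?_ hA₁0.le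
          exact mul_le_mul hCK hprodle hprodnn hCBy
      _ ≤ A₁ * ((C * (B₂^h * (Cp * y^ε))) * ((2:ℝ)^q1 * y^t₁)) :=
          mul_le_mul_of_nonneg_left (mul_le_mul_of_nonneg_left hexpL hCBy) hA₁0.le
      _ = CB * y^(t₁+ε) := by
          rw [Real.rpow_add hy0 t₁ ε, hCBdef]
          ring
      _ ≤ max CA CB * y^(t₁+ε) :=
          mul_le_mul_of_nonneg_right (le_max_right _ _) (Real.rpow_pos_of_pos hy0 _).le


/-- For `θ ∈ (0,1)` and `F ⊆ ℝ^d`: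
`\overline{dim}_{GB} F ≤ \overline{dim}_A^θ F ≤ min (\overline{dim}_{GB} F / (1-θ)) (dim_{qA} F)`. -/
theorem genUpperBoxDim_le_upperSpectrum_le_min
    (d : ℕ) (θ : ℝ) (hθ : θ ∈ Set.Ioo (0 : ℝ) 1) (F : Set (EuclideanSpace ℝ (Fin d))) :
    genUpperBoxDim F ≤ upperSpectrum θ F ∧
      upperSpectrum θ F ≤ min (genUpperBoxDim F / (1 - θ)) (quasiAssouadDim F) := by
  obtain ⟨hθ0, hθ1⟩ := hθ
  have h1θ : 0 < 1 - θ := by linarith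
  set T₁ : Set ℝ := {a | ∀ᶠ θ' in 𝓝[>] (0:ℝ), assouadSpectrum θ' F ≤ a} with hT₁
  have hgb : genUpperBoxDim F = sInf T₁ := by rw [genUpperBoxDim, limsup_eq]
  set T₂ : Set ℝ := {a | ∀ᶠ θ₁ in 𝓝[<] (1:ℝ), upperSpectrum θ₁ F ≤ a} with hT₂
  have hqa : quasiAssouadDim F = sInf T₂ := by rw [quasiAssouadDim, limsup_eq]
  have hasd : ∀ θ₁ ∈ Set.Ioo (0:ℝ) 1, assouadSpectrum θ₁ F ≤ (d:ℝ) :=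
    fun θ₁ h₁ => csInf_le (bddBelow_asSet _ _) (d_mem_asSet F h₁)
  have hupd : ∀ θ₁ ∈ Set.Ioo (0:ℝ) 1, upperSpectrum θ₁ F ≤ (d:ℝ) :=
    fun θ₁ h₁ => csInf_le (bddBelow_upSet _ _) (d_mem_upSet F h₁)
  have hIoo0 : Set.Ioo (0:ℝ) θ ∈ 𝓝[>] (0:ℝ) := Ioo_mem_nhdsGT_of_mem ⟨le_refl 0, hθ0⟩
  have hIoo1 : Set.Ioo (0:ℝ) 1 ∈ 𝓝[>] (0:ℝ) := Ioo_mem_nhdsGT_of_mem ⟨le_refl 0, one_pos⟩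
  have hIio : Set.Ioo θ (1:ℝ) ∈ 𝓝[<] (1:ℝ) := Ioo_mem_nhdsLT_of_mem ⟨hθ1, le_refl 1⟩
  have hT₁d : ((d:ℝ)) ∈ T₁ := by
    rw [hT₁]
    filter_upwards [hIoo1] with θ' hθ'
    exact hasd θ' hθ'
  have hT₁bdd : BddBelow T₁ := by
    refine ⟨0, fun a ha => ?_⟩
    simp only [hT₁, Set.mem_setOf_eq] at ha
    obtain ⟨θ', hθ'⟩ := ha.exists
    exact le_trans (assouadSpectrum_nonneg θ' F) hθ'
  have hupθd : (upSet θ F).Nonempty := ⟨(d:ℝ), d_mem_upSet F ⟨hθ0, hθ1⟩⟩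
  constructor
  · -- genUpperBoxDim ≤ upperSpectrum θ
    rw [hgb]
    refine csInf_le hT₁bdd ?_
    rw [hT₁]
    show ∀ᶠ θ' in 𝓝[>] (0:ℝ), assouadSpectrum θ' F ≤ upperSpectrum θ F
    filter_upwards [hIoo0] with θ' hθ'
    exact csInf_le_csInf (bddBelow_asSet _ _) hupθd (upSet_subset_asSet hθ'.1 hθ'.2.le hθ1 F)
  refine le_min ?_ ?_
  · -- upperSpectrum θ ≤ genUpperBoxDim / (1-θ)
    rw [hgb, le_div_iff₀ h1θ]
    refine le_csInf ⟨(d:ℝ), hT₁d⟩ ?_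
    intro a ha
    simp only [hT₁, Set.mem_setOf_eq] at ha
    have ha0 : 0 ≤ a := by
      obtain ⟨θ', hθ'⟩ := ha.exists
      exact le_trans (assouadSpectrum_nonneg θ' F) hθ'
    have hmain : ∀ η : ℝ, 0 < η → upperSpectrum θ F ≤ a/(1-θ) + η := by
      intro η hη
      have hX : (0:ℝ) < (a+2)/(1-θ) + 1 := by positivity
      set ε : ℝ := min (1/8) (η / ((a+2)/(1-θ) + 1)) with hεdef
      have hεpos : 0 < ε := lt_min (by norm_num) (by positivity)
      have hε18 : ε ≤ 1/8 := min_le_left _ _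
      have hεη : ε * ((a+2)/(1-θ)+1) ≤ η := by
        have h1 : ε ≤ η / ((a+2)/(1-θ)+1) := min_le_right _ _
        calc ε * ((a+2)/(1-θ)+1) ≤ (η / ((a+2)/(1-θ)+1)) * ((a+2)/(1-θ)+1) :=
              mul_le_mul_of_nonneg_right h1 hX.le
          _ = η := div_mul_cancel₀ _ hX.ne'
      have hsmall : Set.Ioo (0:ℝ) (min θ (min (1/4) (ε/2))) ∈ 𝓝[>] (0:ℝ) :=
        Ioo_mem_nhdsGT_of_mem ⟨le_refl 0, by positivity⟩
      obtain ⟨θ', hθ'a, hθ'mem⟩ :=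
        (ha.and (Filter.eventually_of_mem hsmall (fun y hy => hy))).exists
      have hθ'0 : 0 < θ' := hθ'mem.1
      have hθ'θ : θ' < θ := lt_of_lt_of_le hθ'mem.2 (min_le_left _ _)
      have hθ'14 : θ' < 1/4 :=
        lt_of_lt_of_le hθ'mem.2 ((min_le_right _ _).trans (min_le_left _ _))
      have hθ'ε : θ' < ε/2 :=
        lt_of_lt_of_le hθ'mem.2 ((min_le_right _ _).trans (min_le_right _ _))
      have hθ'1 : θ' < 1 := by linarith
      have hasne : (asSet θ' F).Nonempty := ⟨(d:ℝ), d_mem_asSet F ⟨hθ'0, hθ'1⟩⟩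
      have hlt : sInf (asSet θ' F) < a + ε := by
        rw [← assouadSpectrum_eq]
        linarith
      obtain ⟨s, hsmem, hslt⟩ := exists_lt_of_csInf_lt hasne hlt
      obtain ⟨hs0, C, hC0, hbdC⟩ := hsmem
      have hbdC' : ∀ R : ℝ, 0 < R → R < 1 → ∀ x ∈ F,
          (coveringNumber (R ^ (1/θ')) (closedBall x R ∩ F) : ℝ≥0∞)
            ≤ ENNReal.ofReal (max C 1 * (R / R ^ (1/θ')) ^ s) := by
        intro R h0 h1 x hx
        refine (hbdC R h0 h1 x hx).trans (ENNReal.ofReal_le_ofReal ?_)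
        refine mul_le_mul_of_nonneg_right (le_max_left _ _) ?_
        have hb : 0 < R / R ^ (1/θ') := by
          have := Real.rpow_pos_of_pos h0 (1/θ')
          positivity
        positivity
      have hbl := big_lemma F ⟨hθ0, hθ1⟩ hθ'0 (show θ' < 2*θ' by linarith)
        (show 2*θ' < 1 by linarith) hs0 (le_max_right C 1) hbdC' hεpos
      have hup := csInf_le (bddBelow_upSet θ F) hbl
      rw [← upperSpectrum_eq] at hup
      refine hup.trans ?_
      -- arithmetic
      have e1 : (1-θ') ≤ (1+ε)*(1-2*θ') := by nlinarith only [hθ'ε, hε18, hεpos, hθ'0]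
      have step1 : s*(1-θ') ≤ (a+ε)*(1-θ') :=
        mul_le_mul_of_nonneg_right hslt.le (by linarith)
      have step2 : (a+ε)*(1-θ') ≤ (a+ε)*((1+ε)*(1-2*θ')) :=
        mul_le_mul_of_nonneg_left e1 (by linarith)
      have hden : (0:ℝ) < (1-2*θ')*(1-θ) := by nlinarith only [hθ'14, h1θ]
      have e2b : s*(1-θ')/((1-2*θ')*(1-θ)) ≤ (a+ε)*((1+ε)*(1-2*θ'))/((1-2*θ')*(1-θ)) :=
        (div_le_div_iff_of_pos_right hden).2 (step1.trans step2)
      have e2c : (a+ε)*((1+ε)*(1-2*θ'))/((1-2*θ')*(1-θ)) = (a+ε)*(1+ε)/(1-θ) := by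
        have hne : (1-2*θ') ≠ 0 := by nlinarith only [hθ'14]
        field_simp
      have e4a : (a+ε)*(1+ε) ≤ a + ε*(a+2) := by nlinarith only [hεpos, hε18, ha0]
      have e4b : (a+ε)*(1+ε)/(1-θ) ≤ (a + ε*(a+2))/(1-θ) := (div_le_div_iff_of_pos_right h1θ).2 e4a
      have e4c : (a + ε*(a+2))/(1-θ) = a/(1-θ) + ε*((a+2)/(1-θ)) := by
        field_simp
      have efin : ε*((a+2)/(1-θ)) + ε = ε*((a+2)/(1-θ)+1) := by ring
      calc s * (1 - θ') / ((1 - 2*θ') * (1 - θ)) + ε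
          ≤ (a+ε)*(1+ε)/(1-θ) + ε := by
            have := e2b.trans_eq e2c
            linarith
        _ ≤ a/(1-θ) + ε*((a+2)/(1-θ)) + ε := by
            have := e4b.trans_eq e4c
            linarith
        _ ≤ a/(1-θ) + η := by
            have h5 : ε*((a+2)/(1-θ)) + ε ≤ η := by rw [efin]; exact hεη
            linarith
    have hfin : upperSpectrum θ F ≤ a/(1-θ) := le_of_forall_pos_le_add hmain
    calc upperSpectrum θ F * (1-θ) ≤ (a/(1-θ)) * (1-θ) :=
          mul_le_mul_of_nonneg_right hfin h1θ.le
      _ = a := div_mul_cancel₀ a h1θ.ne'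
  · -- upperSpectrum θ ≤ quasiAssouadDim
    rw [hqa]
    refine le_csInf ⟨(d:ℝ), ?_⟩ ?_
    · rw [hT₂]
      have hIoo01 : Set.Ioo (0:ℝ) 1 ∈ 𝓝[<] (1:ℝ) := Ioo_mem_nhdsLT_of_mem ⟨one_pos, le_refl 1⟩
      filter_upwards [hIoo01] with θ₁ h₁
      exact hupd θ₁ h₁
    · intro a ha
      simp only [hT₂, Set.mem_setOf_eq] at ha
      obtain ⟨θ₁, h₁, h₂⟩ :=
        (ha.and (Filter.eventually_of_mem hIio (fun y hy => hy))).exists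
      refine le_trans ?_ h₁
      exact csInf_le_csInf (bddBelow_upSet _ _)
        ⟨(d:ℝ), d_mem_upSet F ⟨hθ0.trans h₂.1, h₂.2⟩⟩
        (upSet_mono hθ0 h₂.1.le h₂.2 F)

end
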